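/- Division rule for Laurent asymptotic expansions: Let A(ε) = a_{h_A} ε^{h_A} + ⋯ + a_{k_A} ε^{k_A} + o_A(ε^{k_A}) and B(ε) = b_{h_B} ε^{h_B} + ⋯ + b_{k_B} ε^{k_B} + o_B(ε^{k_B}) be pivotal Laurent asymptotic expansions on (0, ε₀]. Then there exists 0 < ε₀' ≤ ε₀ such that B(ε) ≠ 0 for all ε ∈ (0, ε₀'], and the function F(ε) = A(ε)/B(ε) admits on (0, ε₀'] a pivotal Laurent asymptotic expansion F(ε) = f_{h_F} ε^{h_F} + ⋯ + f_{k_F} ε^{k_F} + o_F(ε^{k_F}) with parameters h_F = h_A − h_B, k_F = min(k_A − h_B, k_B − 2h_B + h_A) and coefficients determined recursively by f_{h_F + r} = (1/b_{h_B}) ( a_{h_A + r} − Σ_{l=1}^{r} b_{h_B + l} · f_{h_F + r − l} ) for r = 0, …, k_F − h_F; in particular f_{h_F} = a_{h_A}/b_{h_B} ≠ 0. -/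

import Mathlib

open Filter Finset Topology

/-- `lexp f h k c` : the function `f` admits on a right neighbourhood of `0` the Laurent
asymptotic expansion `f ε = c h * ε^h + ⋯ + c k * ε^k + o(ε^k)` as `ε → 0+`. -/
def lexp (f : ℝ → ℝ) (h k : ℤ) (c : ℤ → ℝ) : Prop :=
  Filter.Tendsto (fun ε : ℝ => (f ε - ∑ l ∈ Finset.Icc h k, c l * ε ^ l) / ε ^ k)
    (nhdsWithin 0 (Set.Ioi 0)) (nhds 0)

section Aux

private lemma ev_pos : ∀ᶠ ε : ℝ in nhdsWithin 0 (Set.Ioi 0), 0 < ε :=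
  eventually_mem_nhdsWithin

private lemma ev_le_one : ∀ᶠ ε : ℝ in nhdsWithin 0 (Set.Ioi 0), ε ≤ 1 := by
  filter_upwards [Ioc_mem_nhdsGT_of_mem (by norm_num : (0:ℝ) ∈ Set.Ico 0 1)] with ε hε
  exact hε.2

private lemma zpow_bigO {p q : ℤ} (h : p ≤ q) :
    (fun ε : ℝ => ε ^ q) =O[nhdsWithin 0 (Set.Ioi 0)] fun ε => ε ^ p := by
  apply Asymptotics.IsBigO.of_bound 1
  filter_upwards [ev_pos, ev_le_one] with ε h1 h2
  rw [one_mul, Real.norm_eq_abs, Real.norm_eq_abs, abs_of_pos (zpow_pos h1 _),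
    abs_of_pos (zpow_pos h1 _)]
  exact zpow_le_zpow_right_of_le_one₀ h1 h2 h

private lemma tendsto_zpow_zero {n : ℤ} (h : 0 < n) :
    Filter.Tendsto (fun ε : ℝ => ε ^ n) (nhdsWithin 0 (Set.Ioi 0)) (nhds 0) := by
  have h2 : Filter.Tendsto (fun ε : ℝ => ε ^ n.toNat) (nhdsWithin 0 (Set.Ioi 0)) (nhds 0) := by
    have := (continuous_pow n.toNat).tendsto (0:ℝ)
    rw [zero_pow (by omega)] at this
    exact this.mono_left nhdsWithin_le_nhds
  apply h2.congr'
  filter_upwards [ev_pos] with ε h1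
  rw [← zpow_natCast, Int.toNat_of_nonneg h.le]

private lemma monomial_littleO {s t : ℤ} (h : t < s) (c : ℝ) :
    (fun ε : ℝ => c * ε ^ s) =o[nhdsWithin 0 (Set.Ioi 0)] fun ε => ε ^ t := by
  rw [Asymptotics.isLittleO_iff_tendsto']
  · have h0 : Filter.Tendsto (fun ε : ℝ => c * ε ^ (s - t)) (nhdsWithin 0 (Set.Ioi 0))
        (nhds 0) := by
      simpa using (tendsto_zpow_zero (by omega)).const_mul c
    apply h0.congr'
    filter_upwards [ev_pos] with ε h1
    rw [mul_div_assoc, zpow_sub₀ h1.ne']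
  · filter_upwards [ev_pos] with ε h1 habs
    exact absurd habs (zpow_ne_zero _ h1.ne')

private lemma sum_extend (c : ℤ → ℝ) (h k m M : ℤ) (hm : m ≤ h) (hM : k ≤ M) (ε : ℝ) :
    ∑ l ∈ Finset.Icc h k, c l * ε ^ l
      = ∑ l ∈ Finset.Icc m M, (if l ∈ Finset.Icc h k then c l else 0) * ε ^ l := by
  rw [← Finset.sum_subset (Finset.Icc_subset_Icc hm hM)
    (fun x _ hnx => by rw [if_neg hnx, zero_mul])]
  exact (Finset.sum_congr rfl (fun x hx => by rw [if_pos hx])).symm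

private lemma mul_sum_reindex (u v : ℤ → ℝ) (m M : ℤ)
    (hv : ∀ j, j ∉ Finset.Icc m M → v j = 0) (ε : ℝ) (hε : ε ≠ 0) :
    (∑ i ∈ Finset.Icc m M, u i * ε ^ i) * (∑ j ∈ Finset.Icc m M, v j * ε ^ j)
      = ∑ s ∈ Finset.Icc (2*m) (2*M), (∑ i ∈ Finset.Icc m M, u i * v (s - i)) * ε ^ s := by
  rw [Finset.sum_mul_sum]
  have step : ∀ i ∈ Finset.Icc m M,
      ∑ j ∈ Finset.Icc m M, (u i * ε ^ i) * (v j * ε ^ j)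
        = ∑ s ∈ Finset.Icc (2*m) (2*M), u i * v (s - i) * ε ^ s := by
    intro i hi
    have hi' := Finset.mem_Icc.mp hi
    have h1 : ∑ j ∈ Finset.Icc m M, (u i * ε ^ i) * (v j * ε ^ j)
        = ∑ s ∈ Finset.Icc (i+m) (i+M), u i * v (s - i) * ε ^ s := by
      rw [← map_add_left_Icc m M i, Finset.sum_map]
      apply Finset.sum_congr rfl
      intro j hj
      simp only [addLeftEmbedding_apply]
      rw [add_sub_cancel_left, zpow_add₀ hε]
      ring
    rw [h1]
    apply Finset.sum_subset (Finset.Icc_subset_Icc (by omega) (by omega))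
    intro s _ hs
    have h2 : s - i ∉ Finset.Icc m M := by
      simp only [Finset.mem_Icc] at hs ⊢; omega
    rw [hv _ h2, mul_zero, zero_mul]
  rw [Finset.sum_congr rfl step, Finset.sum_comm]
  exact Finset.sum_congr rfl (fun s _ => (Finset.sum_mul _ _ _).symm)

noncomputable def divC (a b : ℤ → ℝ) (hA hB : ℤ) : ℤ → ℝ
  | z =>
    if h : hA - hB ≤ z then
      (1 / b hB) * (a (z + hB) -
        ∑ l ∈ (Finset.Icc (1:ℤ) (z - (hA - hB))).attach,
          b (hB + l.1) * divC a b hA hB (z - l.1))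
    else 0
termination_by z => (z - (hA - hB)).toNat
decreasing_by
  have := Finset.mem_Icc.mp l.2
  omega

theorem divC_rec (a b : ℤ → ℝ) (hA hB : ℤ) (r : ℤ) (hr : 0 ≤ r) :
    divC a b hA hB (hA - hB + r) =
      (1 / b hB) * (a (hA + r) -
        ∑ l ∈ Finset.Icc (1:ℤ) r, b (hB + l) * divC a b hA hB (hA - hB + r - l)) := by
  rw [divC]
  rw [dif_pos (by omega)]
  congr 1
  congr 1
  · congr 1; omega
  · rw [← Finset.sum_attach (Finset.Icc (1:ℤ) r)
      (fun l => b (hB + l) * divC a b hA hB (hA - hB + r - l))]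
    have : hA - hB + r - (hA - hB) = r := by omega
    rw [this]

theorem coeff_vanish (a b : ℤ → ℝ) (hA kA hB kB m M : ℤ)
    (hAk : hA ≤ kA) (hBk : hB ≤ kB) (pivB : b hB ≠ 0)
    (hm1 : m ≤ hA - hB) (hm2 : m ≤ hB)
    (hM1 : min (kA - hB) (kB - 2*hB + hA) ≤ M)
    (s : ℤ) (hs : s ≤ hB + min (kA - hB) (kB - 2*hB + hA)) :
    (if s ∈ Finset.Icc hA kA then a s else 0) =
      ∑ i ∈ Finset.Icc m M,
        (if i ∈ Finset.Icc (hA - hB) (min (kA - hB) (kB - 2*hB + hA)) then divC a b hA hB i else 0)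
          * (if s - i ∈ Finset.Icc hB kB then b (s - i) else 0) := by
  set hF := hA - hB with hFdef
  set kF := min (kA - hB) (kB - 2*hB + hA) with kFdef
  set f := divC a b hA hB with fdef
  by_cases hsA : hA ≤ s
  · set r := s - hA with rdef
    have hr0 : 0 ≤ r := by omega
    have hr1 : r ≤ kF - hF := by omega
    have hkF1 : kF ≤ kA - hB := min_le_left _ _
    have hkF2 : kF ≤ kB - 2*hB + hA := min_le_right _ _
    rw [if_pos (Finset.mem_Icc.mpr ⟨hsA, by omega⟩)]
    have step1 : ∑ i ∈ Finset.Icc m M,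
        (if i ∈ Finset.Icc hF kF then f i else 0)
          * (if s - i ∈ Finset.Icc hB kB then b (s - i) else 0)
        = ∑ i ∈ Finset.Icc hF (s - hB), f i * b (s - i) := by
      rw [← Finset.sum_subset (Finset.Icc_subset_Icc (by omega) (by omega) :
          Finset.Icc hF (s - hB) ⊆ Finset.Icc m M)]
      · apply Finset.sum_congr rfl
        intro i hi
        have hi' := Finset.mem_Icc.mp hi
        rw [if_pos (Finset.mem_Icc.mpr ⟨hi'.1, by omega⟩),
          if_pos (Finset.mem_Icc.mpr ⟨by omega, by omega⟩)]
      · intro i _ hni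
        rw [Finset.mem_Icc] at hni
        by_cases hiF : hF ≤ i
        · have hbn : s - i ∉ Finset.Icc hB kB := by rw [Finset.mem_Icc]; omega
          rw [if_neg hbn, mul_zero]
        · have hfn : i ∉ Finset.Icc hF kF := by rw [Finset.mem_Icc]; omega
          rw [if_neg hfn, zero_mul]
    rw [step1]
    have step2 : ∑ i ∈ Finset.Icc hF (s - hB), f i * b (s - i)
        = ∑ l ∈ Finset.Icc (0:ℤ) r, b (hB + l) * f (hF + r - l) := by
      apply Finset.sum_nbij' (i := fun x => hF + r - x) (j := fun x => hF + r - x)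
      · intro x hx; rw [Finset.mem_Icc] at hx ⊢; omega
      · intro x hx; rw [Finset.mem_Icc] at hx ⊢; omega
      · intro x hx; omega
      · intro x hx; omega
      · intro x hx
        rw [Finset.mem_Icc] at hx
        have e1 : s - x = hB + (hF + r - x) := by omega
        have e2 : hF + r - (hF + r - x) = x := by omega
        rw [e1, e2, mul_comm]
    rw [step2]
    have hsplit : Finset.Icc (0:ℤ) r = insert 0 (Finset.Icc (1:ℤ) r) := by
      ext x; simp only [Finset.mem_Icc, Finset.mem_insert]; omega
    rw [hsplit, Finset.sum_insert (by simp)]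
    have hrec := divC_rec a b hA hB r hr0
    rw [← fdef, ← hFdef] at hrec
    have hmul : b hB * f (hF + r) = a (hA + r) -
        ∑ l ∈ Finset.Icc (1:ℤ) r, b (hB + l) * f (hF + r - l) := by
      rw [hrec]; field_simp
    rw [sub_zero, add_zero, hmul]
    have : hA + r = s := by omega
    rw [this]; ring
  · rw [if_neg (by rw [Finset.mem_Icc]; omega)]
    symm
    apply Finset.sum_eq_zero
    intro i _
    by_cases hiF : hF ≤ i
    · have hbn : s - i ∉ Finset.Icc hB kB := by rw [Finset.mem_Icc]; omega
      rw [if_neg hbn, mul_zero]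
    · have hfn : i ∉ Finset.Icc hF kF := by rw [Finset.mem_Icc]; omega
      rw [if_neg hfn, zero_mul]

end Aux

/-- Division rule for pivotal Laurent asymptotic expansions: there is `0 < ε₀' ≤ ε₀` with
`B ε ≠ 0` on `(0, ε₀']`, and `A/B` admits a pivotal Laurent asymptotic expansion with
leading exponent `hF = hA - hB`, upper exponent `kF = min (kA - hB) (kB - 2 hB + hA)`,
and coefficients determined by the recursion
`f (hF + r) = (1 / b hB) * (a (hA + r) - ∑_{l=1}^{r} b (hB + l) * f (hF + r - l))`. -/
theorem div_rule_laurent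
    (ε₀ : ℝ) (hε₀ : 0 < ε₀) (hε₁ : ε₀ ≤ 1)
    (A B : ℝ → ℝ) (hA kA hB kB : ℤ) (a b : ℤ → ℝ)
    (hAk : hA ≤ kA) (hBk : hB ≤ kB)
    (pivA : a hA ≠ 0) (pivB : b hB ≠ 0)
    (heA : lexp A hA kA a) (heB : lexp B hB kB b) :
    ∃ ε₀' : ℝ, 0 < ε₀' ∧ ε₀' ≤ ε₀ ∧ (∀ ε ∈ Set.Ioc (0 : ℝ) ε₀', B ε ≠ 0) ∧
      ∃ f : ℤ → ℝ,
        (∀ r : ℤ, 0 ≤ r → r ≤ min (kA - hB) (kB - 2 * hB + hA) - (hA - hB) →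
          f (hA - hB + r) =
            (1 / b hB) *
              (a (hA + r) - ∑ l ∈ Finset.Icc (1 : ℤ) r, b (hB + l) * f (hA - hB + r - l))) ∧
        lexp (fun ε => A ε / B ε) (hA - hB) (min (kA - hB) (kB - 2 * hB + hA)) f ∧
        f (hA - hB) = a hA / b hB ∧ f (hA - hB) ≠ 0 := by
  classical
  set L := nhdsWithin (0:ℝ) (Set.Ioi 0) with hL
  set hF := hA - hB with hFdef
  set kF := min (kA - hB) (kB - 2 * hB + hA) with kFdef
  set f := divC a b hA hB with fdef
  have hkF1 : kF ≤ kA - hB := min_le_left _ _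
  have hkF2 : kF ≤ kB - 2*hB + hA := min_le_right _ _
  have hFkF : hF ≤ kF := by omega
  set m := min (min hA hB) (min hF 0) with mdef
  set M := max (max kA kB) (max kF 0) with Mdef
  have hm1 : m ≤ hA := by omega
  have hm2 : m ≤ hB := by omega
  have hm3 : m ≤ hF := by omega
  have hm4 : m ≤ 0 := by omega
  have hM1 : kA ≤ M := by omega
  have hM2 : kB ≤ M := by omega
  have hM3 : kF ≤ M := by omega
  have hM4 : 0 ≤ M := by omega
  -- notation for the partial sums
  set SA : ℝ → ℝ := fun ε => ∑ l ∈ Finset.Icc hA kA, a l * ε ^ l with SAdef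
  set SB : ℝ → ℝ := fun ε => ∑ l ∈ Finset.Icc hB kB, b l * ε ^ l with SBdef
  set SF : ℝ → ℝ := fun ε => ∑ l ∈ Finset.Icc hF kF, f l * ε ^ l with SFdef
  have hεne : ∀ᶠ ε : ℝ in L, ε ≠ 0 := by filter_upwards [ev_pos] with ε h; exact h.ne'
  -- little-o versions of the hypotheses
  have oA : (fun ε => A ε - SA ε) =o[L] fun ε => ε ^ kA := by
    rw [Asymptotics.isLittleO_iff_tendsto']
    · exact heA
    · filter_upwards [ev_pos] with ε h1 habs
      exact absurd habs (zpow_ne_zero _ h1.ne')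
  have oB : (fun ε => B ε - SB ε) =o[L] fun ε => ε ^ kB := by
    rw [Asymptotics.isLittleO_iff_tendsto']
    · exact heB
    · filter_upwards [ev_pos] with ε h1 habs
      exact absurd habs (zpow_ne_zero _ h1.ne')
  -- SF is O(ε^hF)
  have OF : SF =O[L] fun ε => ε ^ hF := by
    apply Asymptotics.IsBigO.fun_sum
    intro i hi
    have hi' := Finset.mem_Icc.mp hi
    exact (zpow_bigO hi'.1).const_mul_left (f i)
  -- B ε / ε^hB → b hB
  have tB : Filter.Tendsto (fun ε => B ε / ε ^ hB) L (nhds (b hB)) := by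
    have t1 : Filter.Tendsto (fun ε => (B ε - SB ε) / ε ^ hB) L (nhds 0) :=
      (oB.trans_isBigO (zpow_bigO hBk)).tendsto_div_nhds_zero
    have t2 : Filter.Tendsto (fun ε => SB ε / ε ^ hB) L (nhds (b hB)) := by
      have hlim : ∀ j ∈ Finset.Icc hB kB,
          Filter.Tendsto (fun ε : ℝ => b j * ε ^ (j - hB)) L
            (nhds (if j = hB then b j else 0)) := by
        intro j hj
        rcases eq_or_ne j hB with h | h
        · subst h
          simp only [sub_self, zpow_zero, mul_one, if_pos rfl]
          exact tendsto_const_nhds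
        · rw [if_neg h]
          have hj' := Finset.mem_Icc.mp hj
          simpa using (tendsto_zpow_zero (show (0:ℤ) < j - hB by omega)).const_mul (b j)
      have t3 := tendsto_finset_sum _ hlim
      rw [Finset.sum_ite_eq' (Finset.Icc hB kB) hB b,
        if_pos (Finset.mem_Icc.mpr ⟨le_refl _, hBk⟩)] at t3
      apply t3.congr'
      filter_upwards [ev_pos] with ε h1
      rw [SBdef, Finset.sum_div]
      apply Finset.sum_congr rfl
      intro j _
      rw [mul_div_assoc, zpow_sub₀ h1.ne']
    have := t1.add t2
    rw [zero_add] at this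
    apply this.congr
    intro ε
    rw [← add_div, sub_add_cancel]
  have evB : ∀ᶠ ε in L, B ε ≠ 0 := by
    filter_upwards [tB.eventually_ne pivB, ev_pos] with ε h1 h2 hB0
    exact h1 (by rw [hB0, zero_div])
  -- the key little-o estimate
  have key : (fun ε => A ε - SF ε * B ε) =o[L] fun ε => ε ^ (hB + kF) := by
    have e1 : (fun ε => A ε - SA ε) =o[L] fun ε => ε ^ (hB + kF) :=
      oA.trans_isBigO (zpow_bigO (by omega))
    have e2 : (fun ε => SA ε - SF ε * SB ε) =o[L] fun ε => ε ^ (hB + kF) := by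
      have hsum : (fun ε : ℝ => ∑ s ∈ Finset.Icc (2*m) (2*M),
          ((if s ∈ Finset.Icc hA kA then a s else 0) -
            ∑ i ∈ Finset.Icc m M, (if i ∈ Finset.Icc hF kF then f i else 0) *
              (if s - i ∈ Finset.Icc hB kB then b (s - i) else 0)) * ε ^ s)
          =o[L] fun ε => ε ^ (hB + kF) := by
        apply Asymptotics.IsLittleO.fun_sum
        intro s hs
        by_cases hsle : s ≤ hB + kF
        · have hz : (if s ∈ Finset.Icc hA kA then a s else 0) -
              ∑ i ∈ Finset.Icc m M, (if i ∈ Finset.Icc hF kF then f i else 0) *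
                (if s - i ∈ Finset.Icc hB kB then b (s - i) else 0) = 0 := by
            rw [hFdef, kFdef, fdef] at *
            exact sub_eq_zero_of_eq
              (coeff_vanish a b hA kA hB kB m M hAk hBk pivB (by omega) (by omega)
                (by omega) s (by omega))
          rw [hz]
          simpa using Asymptotics.isLittleO_zero (fun ε : ℝ => ε ^ (hB + kF)) L
        · exact monomial_littleO (by omega) _
      apply hsum.congr' _ EventuallyEq.rfl
      filter_upwards [ev_pos] with ε h1
      rw [SAdef, SFdef, SBdef]
      dsimp only
      rw [sum_extend a hA kA (2*m) (2*M) (by omega) (by omega),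
        sum_extend f hF kF m M (by omega) (by omega),
        sum_extend b hB kB m M (by omega) (by omega),
        mul_sum_reindex _ _ m M
          (fun j hj => by rw [if_neg (fun hmem => hj (Finset.Icc_subset_Icc hm2 hM2 hmem))])
          ε h1.ne',
        ← Finset.sum_sub_distrib]
      apply Finset.sum_congr rfl
      intro s _
      exact sub_mul _ _ _
    have e3 : (fun ε => SF ε * (B ε - SB ε)) =o[L] fun ε => ε ^ (hB + kF) := by
      have h4 := OF.mul_isLittleO oB
      apply h4.trans_isBigO
      apply Asymptotics.IsBigO.of_bound 1
      filter_upwards [ev_pos, ev_le_one] with ε h1 h2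
      rw [one_mul, Real.norm_eq_abs, Real.norm_eq_abs, ← zpow_add₀ h1.ne',
        abs_of_pos (zpow_pos h1 _), abs_of_pos (zpow_pos h1 _)]
      exact zpow_le_zpow_right_of_le_one₀ h1 h2 (by omega)
    have := (e1.add e2).sub e3
    apply this.congr_left
    intro ε
    ring
  -- the limit of ε^hB / B ε
  have tinv : Filter.Tendsto (fun ε => ε ^ hB / B ε) L (nhds (1 / b hB)) := by
    have h5 := tB.inv₀ pivB
    rw [← one_div] at h5
    apply h5.congr
    intro ε
    rw [inv_div]
  -- the final limit
  have final : lexp (fun ε => A ε / B ε) hF kF f := by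
    have t1 : Filter.Tendsto (fun ε => (A ε - SF ε * B ε) / ε ^ (hB + kF)) L (nhds 0) :=
      key.tendsto_div_nhds_zero
    have t3 := t1.mul tinv
    rw [zero_mul] at t3
    show Filter.Tendsto _ L _
    apply t3.congr'
    filter_upwards [ev_pos, evB] with ε h1 h2
    have hne : (ε:ℝ) ≠ 0 := h1.ne'
    have h3 : (ε:ℝ) ^ hB ≠ 0 := zpow_ne_zero _ hne
    have h4 : (ε:ℝ) ^ kF ≠ 0 := zpow_ne_zero _ hne
    rw [zpow_add₀ hne]
    show (A ε - SF ε * B ε) / (ε ^ hB * ε ^ kF) * (ε ^ hB / B ε)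
        = (A ε / B ε - SF ε) / ε ^ kF
    field_simp
  -- value of f at hF
  have fval : f hF = a hA / b hB := by
    have h0 := divC_rec a b hA hB 0 le_rfl
    rw [add_zero, add_zero, Finset.Icc_eq_empty (by norm_num), Finset.sum_empty, sub_zero,
      one_div, inv_mul_eq_div] at h0
    exact h0
  -- choose ε₀'
  obtain ⟨u, hu, hsub⟩ := mem_nhdsGT_iff_exists_Ioc_subset.mp evB
  refine ⟨min u ε₀, lt_min hu hε₀, min_le_right _ _, ?_, f, ?_, final, fval, ?_⟩
  · intro ε hε
    exact hsub ⟨hε.1, le_trans hε.2 (min_le_left _ _)⟩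
  · intro r hr _
    exact divC_rec a b hA hB r hr
  · rw [fval]
    exact div_ne_zero pivA pivB
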